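/- arXiv:math/0504205 — 2 statements merged into one kernel-verified Lean document; each statement's English description precedes it below -/
import Mathlib

section
/- For every set A, every n ≥ 1, every partial n-place function f on A and every composition string L = [(i₁,y₁),…,(i_s,y_s)] of partial n-place functions in which every index 1,…,n occurs among i₁,…,i_s, the result of applying L to f equals the superposition f[μ₁(L) … μₙ(L)] as partial functions (both sides have the same domain and agree on it). -/
/-- A partial `n`-place function on `A`: a partial map from `Aⁿ` (i.e. `Fin n → A`) to `A`,
modelled as an `Option`-valued function (`none` = undefined). -/
abbrev NPlace (A : Type*) (n : ℕ) := (Fin n → A) → Option A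

/-- The domain of a partial `n`-place function. -/
def pdom {A : Type*} {n : ℕ} (f : NPlace A n) : Set (Fin n → A) :=
  {a | (f a).isSome}

/-- Superposition `f[g₁…gₙ]`: defined at `ā` exactly when every `gᵢ(ā)` is defined and
`(g₁(ā),…,gₙ(ā)) ∈ dom f`, with value `f(g₁(ā),…,gₙ(ā))`. -/
def superpose {A : Type*} {n : ℕ} (f : NPlace A n) (g : Fin n → NPlace A n) : NPlace A n :=
  fun a => if h : ∀ i, (g i a).isSome then f (fun i => (g i a).get (h i)) else none

/-- The binary composition `f ∘ᵢ g`: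
`(f ∘ᵢ g)(a₁,…,aₙ) = f(a₁,…,a_{i−1}, g(a₁,…,aₙ), a_{i+1},…,aₙ)`. -/
def opc {A : Type*} {n : ℕ} (i : Fin n) (f g : NPlace A n) : NPlace A n :=
  fun a => (g a).bind fun b => f (Function.update a i b)

/-- Applying a composition string `L = [(i₁,y₁),…,(i_s,y_s)]` to `f`:
`f ∘_{i₁} y₁ ∘_{i₂} y₂ ⋯ ∘_{i_s} y_s` (left to right). -/
def applyStr {A : Type*} {n : ℕ} (f : NPlace A n) (L : List (Fin n × NPlace A n)) : NPlace A n :=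
  L.foldl (fun x p => opc p.1 x p.2) f

/-- `μᵢ(L)`: if `i` occurs in the composition string `L` with least position `k`,
this is `some (yₖ ∘_{i_{k+1}} y_{k+1} ⋯ ∘_{i_s} y_s)`; otherwise `none`. -/
def mu {A : Type*} {n : ℕ} (i : Fin n) : List (Fin n × NPlace A n) → Option (NPlace A n)
  | [] => none
  | p :: rest => if p.1 = i then some (applyStr p.2 rest) else mu i rest

/-- The `i`-th projection as a partial `n`-place function. -/
def proj {A : Type*} {n : ℕ} (i : Fin n) : NPlace A n := fun a => some (a i)

lemma applyStr_key {A : Type*} {n : ℕ} (L : List (Fin n × NPlace A n)) :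
    ∀ f : NPlace A n, applyStr f L = superpose f (fun i => (mu i L).getD (proj i)) := by
  induction L with
  | nil =>
    intro f; funext a
    simp [applyStr, superpose, mu, proj]
  | cons p L ih =>
    intro f; funext a
    obtain ⟨j, y⟩ := p
    show applyStr (opc j f y) L a = _
    rw [ih (opc j f y)]
    set G : Fin n → NPlace A n := fun i => (mu i L).getD (proj i) with hG
    have hy : applyStr y L = superpose y G := ih y
    have hmu : ∀ i : Fin n, (mu i ((j, y) :: L)).getD (proj i) =
        if j = i then superpose y G else G i := by
      intro i
      simp only [mu]
      split
      · simp [hy]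
      · rfl
    simp only [hmu]
    by_cases h : ∀ i, (G i a).isSome
    · set b : Fin n → A := fun i => (G i a).get (h i) with hb'
      have hb : superpose y G a = y b := by
        rw [superpose, dif_pos h]
      rw [superpose, dif_pos h]
      show (y b).bind (fun c => f (Function.update b j c)) = _
      by_cases hyb : (y b).isSome
      · obtain ⟨c, hc⟩ := Option.isSome_iff_exists.mp hyb
        have h' : ∀ i, ((if j = i then superpose y G else G i) a).isSome := by
          intro i
          split
          · rw [hb, hc]; rfl
          · exact h i
        rw [superpose, dif_pos h', hc, Option.bind_some]
        congr 1
        funext i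
        by_cases hij : j = i
        · subst hij
          rw [Function.update_self]
          have : (if j = j then superpose y G else G j) a = some c := by
            rw [if_pos rfl, hb, hc]
          exact (Option.get_of_mem _ this).symm
        · rw [Function.update_of_ne (fun hh => hij hh.symm)]
          have : (if j = i then superpose y G else G i) a = G i a := by
            rw [if_neg hij]
          have hm : (if j = i then superpose y G else G i) a = some (b i) := by
            rw [this, hb']
            exact (Option.some_get (h i)).symm
          exact (Option.get_of_mem _ hm).symm
      · rw [Option.not_isSome_iff_eq_none] at hyb
        rw [hyb, Option.bind_none, superpose, dif_neg]
        intro h'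
        have := h' j
        rw [if_pos rfl, hb, hyb] at this
        simp at this
    · rw [superpose, dif_neg h, superpose, dif_neg]
      intro h'
      apply h
      intro i
      have := h' i
      by_cases hij : j = i
      · rw [if_pos hij, superpose, dif_neg h] at this
        simp at this
      · rwa [if_neg hij] at this

theorem applyStr_eq_superpose_mu {A : Type*} {n : ℕ} (hn : 1 ≤ n)
    (f : NPlace A n) (L : List (Fin n × NPlace A n)) (hL : L ≠ [])
    (h : ∀ i : Fin n, (mu i L).isSome) :
    applyStr f L = superpose f (fun i => (mu i L).get (h i)) := by
  rw [applyStr_key L f]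
  have he : (fun i => (mu i L).getD (proj i)) = (fun i => (mu i L).get (h i)) := by
    funext i
    obtain ⟨y, hy⟩ := Option.isSome_iff_exists.mp (h i)
    simp [hy]
  rw [he]
end

section
/- For every set A, every n ≥ 1, every partial n-place function f on A, every composition string L of partial n-place functions, and every index j ∈ {1,…,n} occurring in L: dom(result of applying L to f) ⊆ dom μⱼ(L). -/
lemma pdom_opc_subset {A : Type*} {n : ℕ} (i : Fin n) (f g : NPlace A n) :
    pdom (opc i f g) ⊆ pdom g := by
  intro a ha
  simp only [pdom, opc, Set.mem_setOf_eq] at *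
  cases h : g a with
  | none => simp [h] at ha
  | some b => simp

lemma pdom_opc_mono {A : Type*} {n : ℕ} (i : Fin n) {f g : NPlace A n}
    (h : pdom f ⊆ pdom g) (y : NPlace A n) : pdom (opc i f y) ⊆ pdom (opc i g y) := by
  intro a ha
  simp only [pdom, opc, Set.mem_setOf_eq] at *
  cases hy : y a with
  | none => simp [hy] at ha
  | some b =>
    simp only [hy, Option.bind_some] at *
    exact h ha

lemma pdom_applyStr_mono {A : Type*} {n : ℕ} {f g : NPlace A n}
    (h : pdom f ⊆ pdom g) : ∀ L, pdom (applyStr f L) ⊆ pdom (applyStr g L)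
  | [] => h
  | p :: rest => pdom_applyStr_mono (pdom_opc_mono p.1 h p.2) rest

theorem pdom_applyStr_subset_mu {A : Type*} {n : ℕ} (hn : 1 ≤ n)
    (f : NPlace A n) (L : List (Fin n × NPlace A n)) (hL : L ≠ [])
    (j : Fin n) (m : NPlace A n) (hm : mu j L = some m) :
    pdom (applyStr f L) ⊆ pdom m := by
  induction L generalizing f with
  | nil => exact absurd rfl hL
  | cons p rest ih =>
    simp only [mu] at hm
    by_cases hp : p.1 = j
    · simp only [hp, if_true, Option.some_inj] at hm
      subst hm
      exact pdom_applyStr_mono (pdom_opc_subset p.1 f p.2) rest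
    · simp only [hp, if_false] at hm
      have hrest : rest ≠ [] := by
        rintro rfl; simp [mu] at hm
      exact ih (opc p.1 f p.2) hrest hm
end
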